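/- arXiv:2108.01735 — 2 statements merged into one kernel-verified Lean document; each statement's English description precedes it below -/
import Mathlib

section
/- Let ρ, ρ* ∈ ℂ^N, e = ρ - ρ* ≠ 0, and suppose v = t/‖t‖ with t = αρ + (1-α)ρ* is an eigenvector of E = ρρ^H - ρ*ρ*^H with nonzero eigenvalue λ = e^H t. Then α satisfies the quadratic equation ‖e‖² α² + (e^H ρ* - ρ^H e) α - ρ^H ρ* = 0. -/
noncomputable def toE {n : ℕ} (v : Fin n → ℂ) : EuclideanSpace ℂ (Fin n) :=
  (WithLp.equiv 2 (Fin n → ℂ)).symm v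

noncomputable def ofE {n : ℕ} (v : EuclideanSpace ℂ (Fin n)) : Fin n → ℂ :=
  WithLp.equiv 2 (Fin n → ℂ) v

/-- Outer product `x yᴴ` of two vectors. -/
noncomputable def outer {n : ℕ} (x y : EuclideanSpace ℂ (Fin n)) : Matrix (Fin n) (Fin n) ℂ :=
  Matrix.vecMulVec (ofE x) (star (ofE y))

/-- Spectral (ℓ₂ operator) norm of a square complex matrix. -/
noncomputable def specNorm {n : ℕ} (A : Matrix (Fin n) (Fin n) ℂ) : ℝ :=
  ‖Matrix.toEuclideanCLM (𝕜 := ℂ) (n := Fin n) A‖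

/-- Frobenius norm of a square complex matrix. -/
noncomputable def frobNorm {n : ℕ} (A : Matrix (Fin n) (Fin n) ℂ) : ℝ :=
  Real.sqrt (∑ i, ∑ j, ‖A i j‖ ^ 2)

theorem stmt1 {N : ℕ} (ρ ρs e t v : EuclideanSpace ℂ (Fin N)) (α lam : ℂ)
    (he : e = ρ - ρs) (hene : e ≠ 0)
    (ht : t = α • ρ + (1 - α) • ρs) (htne : t ≠ 0)
    (hv : v = (‖t‖ : ℂ)⁻¹ • t)
    (hlam : lam = (inner ℂ e t : ℂ)) (hlamne : lam ≠ 0)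
    (heig : toE ((outer ρ ρ - outer ρs ρs).mulVec (ofE v)) = lam • v) :
    (‖e‖ : ℂ) ^ 2 * α ^ 2 + ((inner ℂ e ρs : ℂ) - (inner ℂ ρ e : ℂ)) * α - (inner ℂ ρ ρs : ℂ) = 0 := by
  have htnorm : ((‖t‖ : ℝ) : ℂ) ≠ 0 := by
    simpa using norm_ne_zero_iff.mpr htne
  -- componentwise eigen equation for v
  have keyv : ∀ i, (inner ℂ ρ v : ℂ) * ρ i - (inner ℂ ρs v : ℂ) * ρs i = lam * v i := by
    intro i
    have h := congrArg (fun w => w i) heig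
    simp [toE, ofE, outer, Matrix.mulVec, Matrix.vecMulVec, Matrix.sub_apply,
      dotProduct, PiLp.inner_apply, Finset.sum_sub_distrib, Finset.mul_sum,
      Finset.sum_mul, mul_comm, mul_assoc, mul_left_comm] at h ⊢
    rw [← Finset.sum_sub_distrib, ← h]
    exact Finset.sum_congr rfl fun j _ => by ring
  -- componentwise eigen equation for t
  have key : ∀ i, (inner ℂ ρ t : ℂ) * ρ i - (inner ℂ ρs t : ℂ) * ρs i = lam * t i := by
    intro i
    have h := keyv i
    rw [hv] at h
    simp only [inner_smul_right, PiLp.smul_apply, smul_eq_mul] at h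
    field_simp at h
    linear_combination h
  have hAB : (inner ℂ ρ t : ℂ) - (inner ℂ ρs t : ℂ) = lam := by
    rw [hlam, he, inner_sub_left]
  have hce : ∀ i, ((inner ℂ ρ t : ℂ) - lam * α) * e i = 0 := by
    intro i
    have h := key i
    have ht_i : t i = α * ρ i + (1 - α) * ρs i := by rw [ht]; simp
    have he_i : e i = ρ i - ρs i := by rw [he]; simp
    linear_combination h + lam * ht_i + ((inner ℂ ρ t : ℂ) - lam * α) * he_i - ρs i * hAB
  have hex : ∃ i, e i ≠ 0 := by
    by_contra h
    push_neg at h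
    exact hene (by ext j; simpa using h j)
  obtain ⟨i, hi⟩ := hex
  have hc : (inner ℂ ρ t : ℂ) - lam * α = 0 := by
    rcases mul_eq_zero.mp (hce i) with h | h
    · exact h
    · exact absurd h hi
  have hA : (inner ℂ ρ t : ℂ) = α * (inner ℂ ρ ρ : ℂ) + (1 - α) * (inner ℂ ρ ρs : ℂ) := by
    rw [ht]; simp [inner_add_right, inner_smul_right]
  have hlam' : lam = α * ((inner ℂ ρ ρ : ℂ) - (inner ℂ ρs ρ : ℂ))
      + (1 - α) * ((inner ℂ ρ ρs : ℂ) - (inner ℂ ρs ρs : ℂ)) := by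
    rw [hlam, ht, he]
    simp [inner_add_right, inner_smul_right, inner_sub_left]
  have hno : ((‖e‖ : ℝ) : ℂ) ^ 2 = (inner ℂ ρ ρ : ℂ) - (inner ℂ ρ ρs : ℂ)
      - (inner ℂ ρs ρ : ℂ) + (inner ℂ ρs ρs : ℂ) := by
    have hip : (inner ℂ e e : ℂ) = ((‖e‖ : ℝ) : ℂ) ^ 2 := by
      rw [inner_self_eq_norm_sq_to_K]; norm_cast
    rw [← hip, he, inner_sub_left, inner_sub_right, inner_sub_right]
    ring
  have h2 : (inner ℂ e ρs : ℂ) = (inner ℂ ρ ρs : ℂ) - (inner ℂ ρs ρs : ℂ) := by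
    rw [he, inner_sub_left]
  have h5 : (inner ℂ ρ e : ℂ) = (inner ℂ ρ ρ : ℂ) - (inner ℂ ρ ρs : ℂ) := by
    rw [he, inner_sub_right]
  rw [hno, h2, h5]
  rw [hA, hlam'] at hc
  linear_combination -hc
end

section
/- Under the regularity condition Re⟨∇K(y^{(l-1)}), y^{(l-1)} - y*⟩ ≥ (1/α)‖y^{(l-1)} - y*‖² + (1/β)‖∇K(y^{(l-1)})‖² for all iterates, and step sizes γ'_l ∈ [0, 2/β], the iterates y^{(l)} = y^{(l-1)} - γ'_l ∇K(y^{(l-1)}) satisfy ‖y^{(j)} - y*‖² ≤ (∏_{l=1}^{j} (1 - 2γ'_l/α)) ‖y^{(0)} - y*‖² for every j ≥ 1, provided the regularity condition holds at each iterate y^{(l-1)} for l ≤ j. -/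
private lemma step_aux {Ny : ℕ} (α β r : ℝ) (hα : 0 < α) (hβ : 0 < β)
    (hr0 : 0 ≤ r) (hr2 : r ≤ 2 / β)
    (a g : EuclideanSpace ℂ (Fin Ny))
    (hreg : (1 / α) * ‖a‖ ^ 2 + (1 / β) * ‖g‖ ^ 2 ≤ (inner ℂ g a : ℂ).re) :
    ‖a - r • g‖ ^ 2 ≤ (1 - 2 * r / α) * ‖a‖ ^ 2 := by
  have hsm : r • g = (r : ℂ) • g := by simp [Complex.coe_smul]
  have hsym : (inner ℂ a g : ℂ).re = (inner ℂ g a : ℂ).re := by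
    rw [← inner_conj_symm a g, Complex.conj_re]
  have h2 : (inner ℂ a ((r : ℂ) • g) : ℂ).re = r * (inner ℂ g a : ℂ).re := by
    rw [inner_smul_right, Complex.re_ofReal_mul, hsym]
  have h3 : ‖(r : ℂ) • g‖ ^ 2 = r ^ 2 * ‖g‖ ^ 2 := by
    rw [norm_smul]
    simp [mul_pow, Complex.norm_real, abs_of_nonneg hr0]
  have hexp : ‖a - r • g‖ ^ 2
      = ‖a‖ ^ 2 - 2 * (r * (inner ℂ g a : ℂ).re) + r ^ 2 * ‖g‖ ^ 2 := by
    rw [hsm, @norm_sub_sq ℂ, h3]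
    simp only [RCLike.re_to_complex]
    rw [h2]
  set A := ‖a‖ ^ 2 with hA
  set G := ‖g‖ ^ 2 with hG
  set I := (inner ℂ g a : ℂ).re with hI
  have hAnn : 0 ≤ A := by positivity
  have hGnn : 0 ≤ G := by positivity
  have hrb : r * β ≤ 2 := (le_div_iff₀ hβ).mp hr2
  have hregl' : β * A + α * G ≤ α * β * I := by
    have h := mul_le_mul_of_nonneg_left hreg (mul_pos hα hβ).le
    have e : α * β * ((1 / α) * A + (1 / β) * G) = β * A + α * G := by
      field_simp
    rw [e] at h
    exact h
  have key : α * β * (A - 2 * (r * I) + r ^ 2 * G)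
      ≤ α * β * ((1 - 2 * r / α) * A) := by
    have e : α * β * ((1 - 2 * r / α) * A) = α * β * A - 2 * r * β * A := by
      field_simp
    rw [e]
    nlinarith [mul_le_mul_of_nonneg_left hregl' hr0,
      mul_nonneg (mul_nonneg (mul_nonneg hr0 hα.le) hGnn)
        (sub_nonneg.2 hrb)]
  rw [hexp]
  exact le_of_mul_le_mul_left key (mul_pos hα hβ)

theorem stmt11 {Ny : ℕ} (α β : ℝ) (hα : 0 < α) (hβ : 0 < β)
    (gradK : EuclideanSpace ℂ (Fin Ny) → EuclideanSpace ℂ (Fin Ny))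
    (ystar : EuclideanSpace ℂ (Fin Ny)) (γ' : ℕ → ℝ)
    (hγ : ∀ l, 0 ≤ γ' l ∧ γ' l ≤ 2 / β)
    (y : ℕ → EuclideanSpace ℂ (Fin Ny))
    (hiter : ∀ l : ℕ, 1 ≤ l → y l = y (l - 1) - γ' l • gradK (y (l - 1)))
    (hreg : ∀ l : ℕ, 1 ≤ l →
      (1 / α) * ‖y (l - 1) - ystar‖ ^ 2 + (1 / β) * ‖gradK (y (l - 1))‖ ^ 2 ≤
        (inner ℂ (gradK (y (l - 1))) (y (l - 1) - ystar) : ℂ).re)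
    (hfac : ∀ l, 0 ≤ 1 - 2 * γ' l / α) :
    ∀ j : ℕ, 1 ≤ j →
      ‖y j - ystar‖ ^ 2 ≤
        (∏ l ∈ Finset.Icc 1 j, (1 - 2 * γ' l / α)) * ‖y 0 - ystar‖ ^ 2 := by
  have step : ∀ l : ℕ, 1 ≤ l →
      ‖y l - ystar‖ ^ 2 ≤ (1 - 2 * γ' l / α) * ‖y (l - 1) - ystar‖ ^ 2 := by
    intro l hl
    have hy : y l - ystar = (y (l - 1) - ystar) - γ' l • gradK (y (l - 1)) := by
      rw [hiter l hl]; abel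
    rw [hy]
    exact step_aux α β (γ' l) hα hβ (hγ l).1 (hγ l).2 _ _ (hreg l hl)
  intro j hj
  induction j, hj using Nat.le_induction with
  | base =>
    rw [Finset.Icc_self, Finset.prod_singleton]
    exact step 1 le_rfl
  | succ n hn ih =>
    have hprod : (∏ l ∈ Finset.Icc 1 (n + 1), (1 - 2 * γ' l / α))
        = (∏ l ∈ Finset.Icc 1 n, (1 - 2 * γ' l / α)) * (1 - 2 * γ' (n + 1) / α) := by
      rw [Finset.prod_Icc_succ_top (by omega)]
    have h1 := step (n + 1) (by omega)
    simp only [Nat.add_sub_cancel] at h1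
    calc ‖y (n + 1) - ystar‖ ^ 2
        ≤ (1 - 2 * γ' (n + 1) / α) * ‖y n - ystar‖ ^ 2 := h1
      _ ≤ (1 - 2 * γ' (n + 1) / α) *
            ((∏ l ∈ Finset.Icc 1 n, (1 - 2 * γ' l / α)) * ‖y 0 - ystar‖ ^ 2) :=
          mul_le_mul_of_nonneg_left ih (hfac (n + 1))
      _ = (∏ l ∈ Finset.Icc 1 (n + 1), (1 - 2 * γ' l / α)) * ‖y 0 - ystar‖ ^ 2 := by
          rw [hprod]; ring
end
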